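/- The 5-dimensional nilpotent commutative associative algebra A₀₆ degenerates to A₀₉: the structure λ of A₀₉ lies in the closure of the GL(5,ℂ)-orbit O(μ) of the structure μ of A₀₆ (closure in the standard topology on the space of bilinear maps ℂ⁵ × ℂ⁵ → ℂ⁵). -/

import Mathlib

open ContinuousLinearMap

/-- The underlying space `ℂⁿ`. -/
abbrev Vn (n : ℕ) := Fin n → ℂ

/-- The space of bilinear maps `ℂⁿ × ℂⁿ → ℂⁿ` (as continuous linear maps in two
arguments), carrying its standard topology as a finite-dimensional complex vector space. -/
abbrev Bil (n : ℕ) := Vn n →L[ℂ] Vn n →L[ℂ] Vn n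

/-- The action of `GL(n, ℂ)` on bilinear maps: `(g · μ)(x, y) = g (μ (g⁻¹ x) (g⁻¹ y))`. -/
noncomputable def act {n : ℕ} (g : Vn n ≃L[ℂ] Vn n) (μ : Bil n) : Bil n :=
  ((compL ℂ (Vn n) (Vn n) (Vn n)).flip (g.symm : Vn n →L[ℂ] Vn n)).comp
    (((compL ℂ (Vn n) (Vn n) (Vn n)) (g : Vn n →L[ℂ] Vn n)).comp
      (μ.comp (g.symm : Vn n →L[ℂ] Vn n)))

@[simp] lemma act_apply {n : ℕ} (g : Vn n ≃L[ℂ] Vn n) (μ : Bil n) (x y : Vn n) :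
    act g μ x y = g (μ (g.symm x) (g.symm y)) := rfl

/-- The orbit `O(μ)` of a bilinear map under the `GL(n, ℂ)`-action. -/
noncomputable def orbit {n : ℕ} (μ : Bil n) : Set (Bil n) :=
  {ν | ∃ g : Vn n ≃L[ℂ] Vn n, ν = act g μ}

/-- The standard basis `e₁, …, e₅` of `ℂ⁵` (zero-indexed: `e i` is `e_{i+1}`). -/
def e (i : Fin 5) : Vn 5 := Pi.single i 1

/-- Multiplication table of the algebra `𝐀06` (entry `(i, j)` is `eᵢ · eⱼ`). -/
def tblA06 : Fin 5 → Fin 5 → Vn 5 :=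
  ![![e 1, e 2, 0, 0, 0],
   ![e 2, 0, 0, 0, 0],
   ![0, 0, 0, 0, 0],
   ![0, 0, 0, e 4, 0],
   ![0, 0, 0, 0, 0]]

/-- Multiplication table of the algebra `𝐀09` (entry `(i, j)` is `eᵢ · eⱼ`). -/
def tblA09 : Fin 5 → Fin 5 → Vn 5 :=
  ![![0, e 3, e 4, 0, 0],
   ![e 3, 0, -e 4, 0, 0],
   ![e 4, -e 4, 0, 0, 0],
   ![0, 0, 0, 0, 0],
   ![0, 0, 0, 0, 0]]


noncomputable def mkL (c : Fin 5 → Vn 5) : Vn 5 →L[ℂ] Vn 5 :=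
  ∑ i, (ContinuousLinearMap.proj i : Vn 5 →L[ℂ] ℂ).smulRight (c i)

lemma mkL_apply (c : Fin 5 → Vn 5) (x : Vn 5) : mkL c x = ∑ i, x i • c i := by
  simp [mkL]

lemma mkL_e (c : Fin 5 → Vn 5) (i : Fin 5) : mkL c (e i) = c i := by
  rw [mkL_apply]
  simp [e, Pi.single_apply, ite_smul]

lemma vec_expand (x : Vn 5) : x = ∑ i, x i • e i := by
  funext k
  rw [Finset.sum_apply]
  simp [e, Pi.single_apply]

noncomputable def mkB (c : Fin 5 → Fin 5 → Vn 5) : Bil 5 :=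
  ∑ i, (ContinuousLinearMap.proj i : Vn 5 →L[ℂ] ℂ).smulRight (mkL (c i))

lemma mkB_apply (c : Fin 5 → Fin 5 → Vn 5) (x y : Vn 5) :
    mkB c x y = ∑ i, x i • mkL (c i) y := by
  simp [mkB]

lemma mkB_e (c : Fin 5 → Fin 5 → Vn 5) (i j : Fin 5) : mkB c (e i) (e j) = c i j := by
  rw [mkB_apply]
  simp only [e, Pi.single_apply, ite_smul, one_smul, zero_smul, Finset.sum_ite_eq',
    Finset.mem_univ, if_true]
  exact mkL_e (c i) j

lemma bil_ext {B₁ B₂ : Bil 5} (h : ∀ i j, B₁ (e i) (e j) = B₂ (e i) (e j)) : B₁ = B₂ := by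
  ext x y
  rw [vec_expand x, vec_expand y]
  simp only [map_sum, map_smul, ContinuousLinearMap.sum_apply, ContinuousLinearMap.smul_apply, h]

noncomputable def Ecol (t : ℂ) : Fin 5 → Vn 5 :=
  ![t • e 0 + e 3,
    (-t) • e 0 + e 3,
    t⁻¹ • e 1 + t • e 3 + (t⁻¹ ^ 3) • e 4,
    (-t ^ 2) • e 1 + e 4,
    e 2 + t • e 4]

noncomputable def Fcol (t : ℂ) : Fin 5 → Vn 5 :=
  ![(2 * t)⁻¹ • (e 0 - e 1),
    (-(t ^ 2 / 4)) • (e 0 + e 1) + (t / 2) • e 2 + (-(2 * t ^ 2)⁻¹) • e 3,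
    (t ^ 5 / 4) • (e 0 + e 1) + (-(t ^ 4 / 2)) • e 2 + (-(t / 2)) • e 3 + e 4,
    (2 : ℂ)⁻¹ • (e 0 + e 1),
    (-(t ^ 4 / 4)) • (e 0 + e 1) + (t ^ 3 / 2) • e 2 + (2 : ℂ)⁻¹ • e 3]

noncomputable def Gt (t : ℂ) : Vn 5 →L[ℂ] Vn 5 := mkL (Ecol t)
noncomputable def Ginv (t : ℂ) : Vn 5 →L[ℂ] Vn 5 := mkL (Fcol t)

lemma fin5_cases (k : Fin 5) : k = 0 ∨ k = 1 ∨ k = 2 ∨ k = 3 ∨ k = 4 := by revert k; decide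

lemma GinvGt {t : ℂ} (ht : t ≠ 0) (x : Vn 5) : Ginv t (Gt t x) = x := by
  have key : ∀ i, Ginv t (Gt t (e i)) = e i := by
    intro i
    unfold Gt Ginv
    rcases fin5_cases i with rfl|rfl|rfl|rfl|rfl <;>
      · simp only [Ecol, mkL_e, Matrix.cons_val_zero, map_add, map_smul, Fcol,
          Matrix.cons_val_one, Matrix.head_cons, Matrix.cons_val_two, Matrix.tail_cons,
          Matrix.cons_val_three, Matrix.cons_val_four]
        match_scalars <;> (field_simp; try ring)
  conv_lhs => rw [vec_expand x]
  rw [map_sum, map_sum]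
  simp only [map_smul, key]
  exact (vec_expand x).symm

lemma GtGinv {t : ℂ} (ht : t ≠ 0) (x : Vn 5) : Gt t (Ginv t x) = x := by
  have key : ∀ i, Gt t (Ginv t (e i)) = e i := by
    intro i
    unfold Gt Ginv
    rcases fin5_cases i with rfl|rfl|rfl|rfl|rfl <;>
      · simp only [Ecol, mkL_e, Matrix.cons_val_zero, map_add, map_smul, map_sub, Fcol,
          Matrix.cons_val_one, Matrix.head_cons, Matrix.cons_val_two, Matrix.tail_cons,
          Matrix.cons_val_three, Matrix.cons_val_four]
        match_scalars <;> (field_simp; try ring)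
  conv_lhs => rw [vec_expand x]
  rw [map_sum, map_sum]
  simp only [map_smul, key]
  exact (vec_expand x).symm

noncomputable def gdeg {t : ℂ} (ht : t ≠ 0) : Vn 5 ≃L[ℂ] Vn 5 :=
  ContinuousLinearEquiv.equivOfInverse (Ginv t) (Gt t) (GtGinv ht) (GinvGt ht)

@[simp] lemma gdeg_apply {t : ℂ} (ht : t ≠ 0) (x : Vn 5) : gdeg ht x = Ginv t x := rfl

@[simp] lemma gdeg_symm_apply {t : ℂ} (ht : t ≠ 0) (x : Vn 5) : (gdeg ht).symm x = Gt t x := rfl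

noncomputable def ntd (t : ℂ) : Vn 5 := t ^ 3 • e 2 + (-(t ^ 4 / 2)) • (e 0 + e 1)
noncomputable def ntc (t : ℂ) : Vn 5 :=
  -e 4 + t • e 3 + t ^ 4 • e 2 + (-(t ^ 5 / 2)) • (e 0 + e 1)
noncomputable def nts (t : ℂ) : Vn 5 :=
  (t ^ 2 / 2) • e 3 + (t ^ 5 / 2) • e 2 + (-(t ^ 6 / 4)) • (e 0 + e 1)
noncomputable def ntb (t : ℂ) : Vn 5 :=
  (-t ^ 3) • e 4 + (t ^ 4 / 2) • e 3 + (t ^ 7 / 2) • e 2 + (-(t ^ 8 / 4)) • (e 0 + e 1)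

noncomputable def nt (t : ℂ) : Fin 5 → Fin 5 → Vn 5 :=
  ![![ntd t, e 3, e 4, ntb t, 0],
    ![e 3, ntd t, ntc t, -ntb t, 0],
    ![e 4, ntc t, nts t, 0, 0],
    ![ntb t, -ntb t, 0, 0, 0],
    ![0, 0, 0, 0, 0]]

set_option maxHeartbeats 3000000 in
lemma key_entries (μ : Bil 5) (hμ : ∀ i j : Fin 5, μ (e i) (e j) = tblA06 i j)
    {t : ℂ} (ht : t ≠ 0) (i j : Fin 5) :
    act (gdeg ht) μ (e i) (e j) = nt t i j := by
  rw [act_apply]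
  rcases fin5_cases i with rfl|rfl|rfl|rfl|rfl <;> rcases fin5_cases j with rfl|rfl|rfl|rfl|rfl <;>
    · simp only [gdeg_symm_apply, gdeg_apply, Gt, Ginv, mkL_e, Ecol, Fcol, nt, ntd, ntc, nts, ntb,
        tblA06, Matrix.cons_val_zero, Matrix.cons_val_one, Matrix.head_cons, Matrix.cons_val_two,
        Matrix.tail_cons, Matrix.cons_val_three, Matrix.cons_val_four,
        map_add, map_smul, map_sub, map_neg, map_zero,
        ContinuousLinearMap.add_apply, ContinuousLinearMap.smul_apply,
        ContinuousLinearMap.zero_apply, ContinuousLinearMap.neg_apply, hμ,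
        smul_zero, add_zero, zero_add, smul_add, smul_smul, smul_neg, neg_zero]
      try (match_scalars <;> (field_simp; try ring))

lemma nt_zero (i j : Fin 5) : nt 0 i j = tblA09 i j := by
  rcases fin5_cases i with rfl|rfl|rfl|rfl|rfl <;> rcases fin5_cases j with rfl|rfl|rfl|rfl|rfl <;>
    · simp only [nt, ntd, ntc, nts, ntb, tblA09, Matrix.cons_val_zero, Matrix.cons_val_one,
        Matrix.head_cons, Matrix.cons_val_two, Matrix.tail_cons, Matrix.cons_val_three,
        Matrix.cons_val_four]
      try norm_num

lemma nt_cont (i j : Fin 5) : Continuous fun t : ℂ => nt t i j := by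
  rcases fin5_cases i with rfl|rfl|rfl|rfl|rfl <;> rcases fin5_cases j with rfl|rfl|rfl|rfl|rfl <;>
    · simp only [nt, ntd, ntc, nts, ntb, Matrix.cons_val_zero, Matrix.cons_val_one,
        Matrix.head_cons, Matrix.cons_val_two, Matrix.tail_cons, Matrix.cons_val_three,
        Matrix.cons_val_four]
      fun_prop

set_option synthInstance.maxHeartbeats 800000 in
lemma mkB_nt_cont : Continuous fun t : ℂ => mkB (nt t) := by
  haveI h5 : IsTopologicalAddGroup (Bil 5) := inferInstance
  haveI : ContinuousAdd (Bil 5) := by exact h5.toContinuousAdd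
  unfold mkB mkL
  refine continuous_finset_sum _ fun i _ => ?_
  have h1 : Continuous fun t : ℂ =>
      ∑ j, (ContinuousLinearMap.proj j : Vn 5 →L[ℂ] ℂ).smulRight (nt t i j) :=
    continuous_finset_sum _ fun j _ =>
      ((ContinuousLinearMap.smulRightL ℂ (Vn 5) (Vn 5)
        (ContinuousLinearMap.proj j)).continuous).comp (nt_cont i j)
  exact ((ContinuousLinearMap.smulRightL ℂ (Vn 5) (Vn 5 →L[ℂ] Vn 5)
    (ContinuousLinearMap.proj i)).continuous).comp h1

/-- The $5$-dimensional nilpotent commutative associative algebra `𝐀06` degenerates to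
`𝐀09`: the structure `λ` of `𝐀09` lies in the closure of
the `GL(5, ℂ)`-orbit `O(μ)` of the structure `μ` of `𝐀06`. -/
theorem A06_deg_A09 (μ lam : Bil 5)
    (hμ : ∀ i j : Fin 5, μ (e i) (e j) = tblA06 i j)
    (hlam : ∀ i j : Fin 5, lam (e i) (e j) = tblA09 i j) :
    lam ∈ closure (orbit μ) := by
  have hL : lam = mkB (nt 0) := by
    apply bil_ext
    intro i j
    rw [hlam, mkB_e, nt_zero]
  rw [hL]
  have htend : Filter.Tendsto (fun t : ℂ => mkB (nt t)) (nhdsWithin (0 : ℂ) {(0 : ℂ)}ᶜ)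
      (nhds (mkB (nt 0))) :=
    (mkB_nt_cont.tendsto 0).mono_left nhdsWithin_le_nhds
  refine mem_closure_of_tendsto htend ?_
  filter_upwards [self_mem_nhdsWithin] with t ht
  have ht' : t ≠ 0 := ht
  refine ⟨gdeg ht', ?_⟩
  apply bil_ext
  intro i j
  rw [mkB_e, key_entries μ hμ ht' i j]
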